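/- Let r ≥ 3 be an integer and let α ∈ ℂ satisfy rα² + 2(r−1)α + (r−1) = 0 (any such α is non-real, and then (r−1) + αr ≠ 0). In ℂ[p₁,…,p_r] define s_i = z_i for i ≠ r and s_r = ((r−1)/((r−1)+αr))·(z_r + α·z₁·z_{r−1}). Then for all 1 ≤ i,j ≤ r there exist polynomials P_{ij} and Q_{ij} in r−1 variables such that Σ_{k=1}^r (∂s_i/∂p_k)(∂s_j/∂p_k) = P_{ij}(s₁,…,s_{r−2},s_r) + s_{r−1}·Q_{ij}(s₁,…,s_{r−2},s_r) in ℂ[p₁,…,p_r]. (That is, in the coordinates s the intersection form on the orbit space of the standard representation of the permutation group S_r is at most linear in s_{r−1}.) -/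

import Mathlib

open MvPolynomial

/-- Normalized power sums `z_i = (1/i) Σ_{k=1}^r p_k^i` in `ℂ[p₁,…,p_r]`. -/
noncomputable def zPol (r : ℕ) (i : ℕ) : MvPolynomial (Fin r) ℂ :=
  C ((1 : ℂ) / (i : ℂ)) * ∑ k : Fin r, (X k) ^ i

/-- The coordinates `s_i`: `s_i = z_i` for `i ≠ r` and
`s_r = ((r−1)/((r−1)+αr))(z_r + α z₁ z_{r−1})`. -/
noncomputable def sPol (r : ℕ) (α : ℂ) (i : ℕ) : MvPolynomial (Fin r) ℂ :=
  if i = r then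
    C (((r : ℂ) - 1) / (((r : ℂ) - 1) + α * r)) *
      (zPol r r + C α * zPol r 1 * zPol r (r - 1))
  else zPol r i

/-- The substitution variables `(s₁, …, s_{r−2}, s_r)` (omitting `s_{r−1}`). -/
noncomputable def sVars (r : ℕ) (α : ℂ) : Fin (r - 1) → MvPolynomial (Fin r) ℂ :=
  fun m => if (m : ℕ) < r - 2 then sPol r α ((m : ℕ) + 1) else sPol r α r

namespace Aux

open Finset

variable (r : ℕ)

/-- abbreviation for the power sum -/
noncomputable abbrev Pw (m : ℕ) : MvPolynomial (Fin r) ℂ := psum (Fin r) ℂ m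

noncomputable abbrev E (k : ℕ) : MvPolynomial (Fin r) ℂ := esymm (Fin r) ℂ k

/-- the subalgebra generated by low power sums p_1,…,p_{r-2} -/
noncomputable def Zs : Subalgebra ℂ (MvPolynomial (Fin r) ℂ) :=
  Algebra.adjoin ℂ ((fun i => Pw r i) '' (Set.Icc 1 (r-2)))

/-- "at most linear in p_{r-1}, p_r over Zs" -/
def Nlin (x : MvPolynomial (Fin r) ℂ) : Prop :=
  ∃ a b c, a ∈ Zs r ∧ b ∈ Zs r ∧ c ∈ Zs r ∧ x = a + Pw r (r-1) * b + Pw r r * c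

variable {r}

lemma Nlin_of_Z {a : MvPolynomial (Fin r) ℂ} (ha : a ∈ Zs r) : Nlin r a :=
  ⟨a, 0, 0, ha, (Zs r).zero_mem, (Zs r).zero_mem, by ring⟩

lemma Nlin_add {x y : MvPolynomial (Fin r) ℂ} (hx : Nlin r x) (hy : Nlin r y) :
    Nlin r (x + y) := by
  obtain ⟨a, b, c, ha, hb, hc, rfl⟩ := hx
  obtain ⟨a', b', c', ha', hb', hc', rfl⟩ := hy
  exact ⟨a + a', b + b', c + c', (Zs r).add_mem ha ha', (Zs r).add_mem hb hb',
    (Zs r).add_mem hc hc', by ring⟩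

lemma Nlin_Zmul {w x : MvPolynomial (Fin r) ℂ} (hw : w ∈ Zs r) (hx : Nlin r x) :
    Nlin r (w * x) := by
  obtain ⟨a, b, c, ha, hb, hc, rfl⟩ := hx
  exact ⟨w * a, w * b, w * c, (Zs r).mul_mem hw ha, (Zs r).mul_mem hw hb,
    (Zs r).mul_mem hw hc, by ring⟩

lemma Nlin_pw_rm1_mul {b : MvPolynomial (Fin r) ℂ} (hb : b ∈ Zs r) :
    Nlin r (Pw r (r-1) * b) :=
  ⟨0, b, 0, (Zs r).zero_mem, hb, (Zs r).zero_mem, by ring⟩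

lemma Nlin_pw_r_mul {c : MvPolynomial (Fin r) ℂ} (hc : c ∈ Zs r) :
    Nlin r (Pw r r * c) :=
  ⟨0, 0, c, (Zs r).zero_mem, (Zs r).zero_mem, hc, by ring⟩

lemma Nlin_sum {s : Finset ℕ} {f : ℕ → MvPolynomial (Fin r) ℂ}
    (h : ∀ i ∈ s, Nlin r (f i)) : Nlin r (∑ i ∈ s, f i) := by
  classical
  induction s using Finset.induction_on with
  | empty => simpa using Nlin_of_Z (Zs r).zero_mem
  | insert a s hni ih =>
    rw [Finset.sum_insert hni]
    exact Nlin_add (h a (mem_insert_self a s)) (ih fun i hi => h i (mem_insert_of_mem hi))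

lemma pw_mem_Z {m : ℕ} (hm : m ≤ r - 2) : Pw r m ∈ Zs r := by
  rcases Nat.eq_zero_or_pos m with rfl | hm1
  · show psum (Fin r) ℂ 0 ∈ Zs r
    rw [psum_zero]
    exact (Zs r).natCast_mem _
  · exact Algebra.subset_adjoin ⟨m, Set.mem_Icc.2 ⟨hm1, hm⟩, rfl⟩

/-- Newton's identity in range form. -/
lemma newton_range (k : ℕ) :
    (k : MvPolynomial (Fin r) ℂ) * E r k =
      (-1) ^ (k + 1) * ∑ i ∈ range k, (-1) ^ i * E r i * Pw r (k - i) := by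
  rw [mul_esymm_eq_sum]
  congr 1
  rw [Finset.sum_filter, Finset.Nat.sum_antidiagonal_eq_sum_range_succ_mk,
    Finset.sum_range_succ, if_neg (lt_irrefl k)]
  rw [add_zero]
  exact Finset.sum_congr rfl fun i hi => by rw [if_pos (Finset.mem_range.1 hi)]

lemma esymm_eq_zero_of_gt {k : ℕ} (hk : r < k) : E r k = 0 := by
  show esymm (Fin r) ℂ k = 0
  rw [esymm, show (Finset.powersetCard k (univ : Finset (Fin r))) = ∅ from
    Finset.powersetCard_eq_empty.2 (by simpa using hk)]
  simp

/-- recurrence for high power sums -/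
lemma C_mem_Z (c : ℂ) : C c ∈ Zs r := by
  rw [← MvPolynomial.algebraMap_eq]
  exact (Zs r).algebraMap_mem c

lemma neg_one_pow_mem (n : ℕ) : ((-1 : MvPolynomial (Fin r) ℂ)) ^ n ∈ Zs r :=
  (Zs r).pow_mem ((Zs r).neg_mem (Zs r).one_mem) n

lemma psum_rec {m : ℕ} (hm : r < m) :
    Pw r m = ∑ i ∈ range r, (-1) ^ i * E r (i + 1) * Pw r (m - (i + 1)) := by
  have h0 := newton_range (r := r) m
  rw [esymm_eq_zero_of_gt hm, mul_zero, eq_comm, neg_one_pow_mul_eq_zero_iff] at h0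
  obtain ⟨n, rfl⟩ : ∃ n, m = n + 1 := ⟨m-1, by omega⟩
  rw [Finset.sum_range_succ'] at h0
  simp only [esymm_zero, pow_zero, one_mul, mul_one, Nat.sub_zero] at h0
  rw [← Finset.sum_subset (Finset.range_subset_range.2 (show r ≤ n by omega))
    (fun x hx hxr => by
      rw [esymm_eq_zero_of_gt (show r < x + 1 by simp only [Finset.mem_range] at hxr; omega),
        mul_zero, zero_mul])] at h0
  have h1 : Pw r (n+1) =
      -∑ i ∈ range r, (-1) ^ (i+1) * E r (i + 1) * Pw r (n + 1 - (i + 1)) := by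
    linear_combination h0
  rw [h1, ← Finset.sum_neg_distrib]
  exact Finset.sum_congr rfl fun i _ => by ring

lemma esymm_mem_Z : ∀ k, k ≤ r - 2 → E r k ∈ Zs r := by
  intro k
  induction k using Nat.strong_induction_on with
  | _ k ih =>
  intro hk
  rcases Nat.eq_zero_or_pos k with rfl | hk1
  · rw [show E r 0 = 1 from esymm_zero _ _]
    exact (Zs r).one_mem
  · have h0 := newton_range (r := r) k
    have hE : E r k = C ((1:ℂ)/k) * ((k : MvPolynomial (Fin r) ℂ) * E r k) := by
      rw [show ((k:ℕ) : MvPolynomial (Fin r) ℂ) = C (k:ℂ) by simp, ← mul_assoc, ← C_mul,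
        one_div, inv_mul_cancel₀ (by exact_mod_cast hk1.ne'), C_1, one_mul]
    rw [hE, h0]
    refine (Zs r).mul_mem (C_mem_Z _) ((Zs r).mul_mem (neg_one_pow_mem _) ?_)
    refine Subalgebra.sum_mem _ fun i hi => ?_
    simp only [Finset.mem_range] at hi
    exact (Zs r).mul_mem ((Zs r).mul_mem (neg_one_pow_mem _) (ih i hi (by omega)))
      (pw_mem_Z (by omega))

lemma cast_rm1 (hr : 3 ≤ r) : (((r-1 : ℕ)) : ℂ) = (r:ℂ) - 1 := by
  push_cast [Nat.cast_sub (show 1 ≤ r by omega)]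
  ring

lemma rm1_ne (hr : 3 ≤ r) : ((r:ℂ) - 1) ≠ 0 := by
  rw [← cast_rm1 hr]
  exact_mod_cast (show (r-1 : ℕ) ≠ 0 by omega)

lemma esymm_rm1 (hr : 3 ≤ r) :
    ∃ w ∈ Zs r, E r (r-1) = C ((-1)^r / ((r:ℂ)-1)) * Pw r (r-1) + w := by
  have h0 := newton_range (r := r) (r-1)
  rw [show r - 1 + 1 = r by omega] at h0
  obtain ⟨n, hn⟩ : ∃ n, r - 1 = n + 1 := ⟨r-2, by omega⟩
  rw [hn, Finset.sum_range_succ'] at h0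
  simp only [esymm_zero, pow_zero, one_mul, mul_one, Nat.sub_zero] at h0
  set z : MvPolynomial (Fin r) ℂ :=
    ∑ i ∈ range n, (-1) ^ (i+1) * E r (i + 1) * Pw r (n + 1 - (i + 1)) with hz
  have hzZ : z ∈ Zs r := by
    refine Subalgebra.sum_mem _ fun i hi => ?_
    simp only [Finset.mem_range] at hi
    exact (Zs r).mul_mem ((Zs r).mul_mem (neg_one_pow_mem _) (esymm_mem_Z _ (by omega)))
      (pw_mem_Z (by omega))
  have hE : E r (r-1) = C ((1:ℂ)/((r:ℂ)-1)) * (((r-1:ℕ) : MvPolynomial (Fin r) ℂ) * E r (r-1)) := by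
    rw [show (((r-1:ℕ)) : MvPolynomial (Fin r) ℂ) = C (((r-1:ℕ)):ℂ) by simp, cast_rm1 hr,
      ← mul_assoc, ← C_mul, one_div, inv_mul_cancel₀ (rm1_ne hr), C_1, one_mul]
  refine ⟨C ((-1)^r/((r:ℂ)-1)) * z, (Zs r).mul_mem (C_mem_Z _) hzZ, ?_⟩
  rw [hE, hn, h0,
    show ((-1 : MvPolynomial (Fin r) ℂ)) ^ r = C ((-1:ℂ)^r) by rw [map_pow, map_neg, map_one],
    ← mul_assoc, ← C_mul, show (1:ℂ)/((r:ℂ)-1) * (-1)^r = (-1:ℂ)^r/((r:ℂ)-1) by ring]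
  ring

lemma Nlin_pw_rm1 : Nlin r (Pw r (r-1)) :=
  ⟨0, 1, 0, (Zs r).zero_mem, (Zs r).one_mem, (Zs r).zero_mem, by ring⟩

lemma Nlin_pw_r : Nlin r (Pw r r) :=
  ⟨0, 0, 1, (Zs r).zero_mem, (Zs r).zero_mem, (Zs r).one_mem, by ring⟩

lemma esymm_r_Nlin (hr : 3 ≤ r) : Nlin r (E r r) := by
  have h0 := newton_range (r := r) r
  have hE : E r r = C ((1:ℂ)/(r:ℂ)) * ((r : MvPolynomial (Fin r) ℂ) * E r r) := by
    rw [show ((r:ℕ) : MvPolynomial (Fin r) ℂ) = C ((r:ℕ):ℂ) by simp, ← mul_assoc, ← C_mul,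
      one_div, inv_mul_cancel₀ (by exact_mod_cast (show r ≠ 0 by omega)), C_1, one_mul]
  rw [hE, h0]
  refine Nlin_Zmul (C_mem_Z _) (Nlin_Zmul (neg_one_pow_mem _) (Nlin_sum fun i hi => ?_))
  simp only [Finset.mem_range] at hi
  rcases Nat.lt_or_ge i 1 with h1 | h1
  · -- i = 0
    obtain rfl : i = 0 := by omega
    rw [show ((-1 : MvPolynomial (Fin r) ℂ))^0 * E r 0 * Pw r (r - 0) = Pw r r * 1 by
      rw [show E r 0 = 1 from esymm_zero _ _]; simp]
    exact Nlin_pw_r_mul (Zs r).one_mem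
  rcases Nat.lt_or_ge i (r-1) with h2 | h2
  · -- 1 ≤ i ≤ r-2
    have hterm : Nlin r (Pw r (r - i)) := by
      rcases Nat.lt_or_ge i 2 with h | h
      · obtain rfl : i = 1 := by omega
        exact Nlin_pw_rm1
      · exact Nlin_of_Z (pw_mem_Z (by omega))
    exact Nlin_Zmul ((Zs r).mul_mem (neg_one_pow_mem _) (esymm_mem_Z _ (by omega))) hterm
  · -- i = r-1
    obtain rfl : i = r - 1 := by omega
    obtain ⟨w, hwZ, hw⟩ := esymm_rm1 hr
    rw [hw, show r - (r-1) = 1 by omega]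
    have : ((-1 : MvPolynomial (Fin r) ℂ)) ^ (r-1) * (C ((-1)^r / ((r:ℂ)-1)) * Pw r (r-1) + w)
        * Pw r 1 = Pw r (r-1) * ((-1)^(r-1) * C ((-1)^r / ((r:ℂ)-1)) * Pw r 1)
          + ((-1)^(r-1) * w * Pw r 1) := by ring
    rw [this]
    refine Nlin_add (Nlin_pw_rm1_mul ?_) (Nlin_of_Z ?_)
    · exact (Zs r).mul_mem ((Zs r).mul_mem (neg_one_pow_mem _) (C_mem_Z _)) (pw_mem_Z (by omega))
    · exact (Zs r).mul_mem ((Zs r).mul_mem (neg_one_pow_mem _) hwZ) (pw_mem_Z (by omega))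

lemma Nlin_psum (hr : 3 ≤ r) : ∀ m, m ≤ 2*r-3 → Nlin r (Pw r m) := by
  intro m
  induction m using Nat.strong_induction_on with
  | _ m ih =>
  intro hm
  rcases Nat.lt_or_ge m (r-1) with h1 | h1
  · exact Nlin_of_Z (pw_mem_Z (by omega))
  rcases Nat.lt_or_ge m (r+1) with h2 | h2
  · rcases (show m = r - 1 ∨ m = r by omega) with rfl | rfl
    · exact Nlin_pw_rm1
    · exact Nlin_pw_r
  · rw [psum_rec (show r < m by omega)]
    refine Nlin_sum fun i hi => ?_
    simp only [Finset.mem_range] at hi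
    rcases Nat.lt_or_ge i (r-2) with hje | hje
    · exact Nlin_Zmul ((Zs r).mul_mem (neg_one_pow_mem _) (esymm_mem_Z _ (by omega)))
        (ih (m - (i+1)) (by omega) (by omega))
    rcases Nat.lt_or_ge i (r-1) with hje2 | hje2
    · obtain rfl : i = r-2 := by omega
      obtain ⟨w, hwZ, hw⟩ := esymm_rm1 hr
      rw [show r - 2 + 1 = r - 1 by omega, hw]
      have hn : Pw r (m - (r-1)) ∈ Zs r := pw_mem_Z (by omega)
      have heq : ((-1 : MvPolynomial (Fin r) ℂ)) ^ (r-2) *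
          (C ((-1)^r / ((r:ℂ)-1)) * Pw r (r-1) + w) * Pw r (m - (r-1))
          = Pw r (r-1) * ((-1)^(r-2) * C ((-1)^r / ((r:ℂ)-1)) * Pw r (m - (r-1)))
            + ((-1)^(r-2) * w * Pw r (m - (r-1))) := by ring
      rw [heq]
      exact Nlin_add (Nlin_pw_rm1_mul ((Zs r).mul_mem ((Zs r).mul_mem (neg_one_pow_mem _)
        (C_mem_Z _)) hn)) (Nlin_of_Z ((Zs r).mul_mem ((Zs r).mul_mem (neg_one_pow_mem _) hwZ) hn))
    · obtain rfl : i = r-1 := by omega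
      rw [show r - 1 + 1 = r by omega]
      rw [show ((-1 : MvPolynomial (Fin r) ℂ)) ^ (r-1) * E r r * Pw r (m - r)
          = ((-1)^(r-1) * Pw r (m - r)) * E r r by ring]
      exact Nlin_Zmul ((Zs r).mul_mem (neg_one_pow_mem _) (pw_mem_Z (by omega))) (esymm_r_Nlin hr)

lemma psum_2rm2 (hr : 3 ≤ r) :
    ∃ w, Nlin r w ∧ Pw r (2*r-2) = C (1/((r:ℂ)-1)) * Pw r (r-1)^2 + w := by
  obtain ⟨w, hwZ, hw⟩ := esymm_rm1 hr
  have hrec := psum_rec (r := r) (show r < 2*r-2 by omega)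
  rw [← Finset.sum_erase_add _ _ (show r-2 ∈ range r by rw [Finset.mem_range]; omega)] at hrec
  have hterm : (-1 : MvPolynomial (Fin r) ℂ) ^ (r-2) * E r (r-2+1) * Pw r (2*r-2 - (r-2+1))
      = C (1/((r:ℂ)-1)) * Pw r (r-1)^2 + Pw r (r-1) * (C ((-1:ℂ)^(r-2)) * w) := by
    rw [show r-2+1 = r-1 by omega, show 2*r-2 - (r-1) = r-1 by omega, hw,
      show ((-1 : MvPolynomial (Fin r) ℂ)) ^ (r-2) = C ((-1:ℂ)^(r-2)) by
        rw [map_pow, map_neg, map_one]]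
    have hc : ((-1:ℂ)^(r-2)) * ((-1)^r / ((r:ℂ)-1)) = 1/((r:ℂ)-1) := by
      rw [show ((-1:ℂ)^(r-2)) * ((-1)^r / ((r:ℂ)-1)) = ((-1)^(r-2)*(-1)^r) * (1/((r:ℂ)-1)) by
        ring, ← pow_add, show r-2+r = 2*(r-1) by omega, pow_mul]
      norm_num
    have hC : C ((-1:ℂ)^(r-2)) * C ((-1:ℂ)^r / ((r:ℂ)-1))
        = (C (1/((r:ℂ)-1)) : MvPolynomial (Fin r) ℂ) := by rw [← C_mul, hc]
    linear_combination (Pw r (r-1))^2 * hC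
  have hsum : Nlin r (∑ i ∈ (range r).erase (r-2),
      (-1)^i * E r (i+1) * Pw r (2*r-2 - (i+1))) := by
    refine Nlin_sum fun i hi => ?_
    simp only [Finset.mem_erase, Finset.mem_range] at hi
    obtain ⟨hne, hir⟩ := hi
    rcases Nat.lt_or_ge i (r-2) with hje | hje
    · exact Nlin_Zmul ((Zs r).mul_mem (neg_one_pow_mem _) (esymm_mem_Z _ (by omega)))
        (Nlin_psum hr _ (by omega))
    · obtain rfl : i = r-1 := by omega
      rw [show r - 1 + 1 = r by omega]
      rw [show ((-1 : MvPolynomial (Fin r) ℂ)) ^ (r-1) * E r r * Pw r (2*r-2 - r)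
          = ((-1)^(r-1) * Pw r (2*r-2 - r)) * E r r by ring]
      exact Nlin_Zmul ((Zs r).mul_mem (neg_one_pow_mem _) (pw_mem_Z (by omega))) (esymm_r_Nlin hr)
  refine ⟨(∑ i ∈ (range r).erase (r-2), (-1)^i * E r (i+1) * Pw r (2*r-2 - (i+1)))
      + Pw r (r-1) * (C ((-1:ℂ)^(r-2)) * w),
    Nlin_add hsum (Nlin_pw_rm1_mul ((Zs r).mul_mem (C_mem_Z _) hwZ)), ?_⟩
  rw [hrec, hterm]
  ring

section Msec

variable {r : ℕ} {α : ℂ}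

/-- goal shape: polynomial in the sVars plus s_{r-1} times such -/
def Mp (r : ℕ) (α : ℂ) (x : MvPolynomial (Fin r) ℂ) : Prop :=
  ∃ P Q : MvPolynomial (Fin (r - 1)) ℂ,
    x = MvPolynomial.aeval (sVars r α) P + sPol r α (r - 1) * MvPolynomial.aeval (sVars r α) Q

noncomputable def SR (r : ℕ) (α : ℂ) : Subalgebra ℂ (MvPolynomial (Fin r) ℂ) :=
  (MvPolynomial.aeval (sVars r α)).range

lemma Mp_of_SR {x : MvPolynomial (Fin r) ℂ} (hx : x ∈ SR r α) : Mp r α x := by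
  rw [SR, AlgHom.mem_range] at hx
  obtain ⟨P, rfl⟩ := hx
  exact ⟨P, 0, by simp⟩

lemma Mp_add {x y : MvPolynomial (Fin r) ℂ} (hx : Mp r α x) (hy : Mp r α y) : Mp r α (x + y) := by
  obtain ⟨P, Q, rfl⟩ := hx
  obtain ⟨P', Q', rfl⟩ := hy
  exact ⟨P + P', Q + Q', by rw [map_add, map_add]; ring⟩

lemma Mp_SRmul {y x : MvPolynomial (Fin r) ℂ} (hy : y ∈ SR r α) (hx : Mp r α x) :
    Mp r α (y * x) := by
  rw [SR, AlgHom.mem_range] at hy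
  obtain ⟨Y, rfl⟩ := hy
  obtain ⟨P, Q, rfl⟩ := hx
  exact ⟨Y * P, Y * Q, by rw [map_mul, map_mul]; ring⟩

lemma Mp_s_mul {y : MvPolynomial (Fin r) ℂ} (hy : y ∈ SR r α) :
    Mp r α (sPol r α (r-1) * y) := by
  rw [SR, AlgHom.mem_range] at hy
  obtain ⟨Y, rfl⟩ := hy
  exact ⟨0, Y, by simp⟩

lemma C_mem_SR (c : ℂ) : C c ∈ SR r α := by
  rw [← MvPolynomial.algebraMap_eq]
  exact (SR r α).algebraMap_mem c

lemma Mp_C_mul {x : MvPolynomial (Fin r) ℂ} (c : ℂ) (hx : Mp r α x) : Mp r α (C c * x) :=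
  Mp_SRmul (C_mem_SR c) hx

lemma zPol_eq (i : ℕ) : zPol r i = C ((1:ℂ)/(i:ℂ)) * Pw r i := rfl

lemma pw_eq {i : ℕ} (hi : i ≠ 0) : Pw r i = C ((i:ℕ):ℂ) * zPol r i := by
  rw [zPol_eq, ← mul_assoc, ← C_mul, one_div, mul_inv_cancel₀ (by exact_mod_cast hi), C_1,
    one_mul]

lemma sPol_ne {i : ℕ} (hi : i ≠ r) : sPol r α i = zPol r i := if_neg hi

lemma sPol_def : sPol r α r = C (((r : ℂ) - 1) / (((r : ℂ) - 1) + α * r)) *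
    (zPol r r + C α * zPol r 1 * zPol r (r - 1)) := if_pos rfl

lemma sPol_rm1 (hr : 3 ≤ r) : sPol r α (r-1) = zPol r (r-1) := sPol_ne (by omega)

lemma zPol_mem_SR {i : ℕ} (h1 : 1 ≤ i) (h2 : i ≤ r - 2) : zPol r i ∈ SR r α := by
  rw [SR, AlgHom.mem_range]
  refine ⟨X ⟨i-1, by omega⟩, ?_⟩
  rw [aeval_X, sVars]
  simp only
  rw [if_pos (show i - 1 < r - 2 by omega), show i - 1 + 1 = i by omega,
    sPol_ne (show i ≠ r by omega)]

lemma pw_mem_SR (hr : 3 ≤ r) {i : ℕ} (h2 : i ≤ r - 2) : Pw r i ∈ SR r α := by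
  rcases Nat.eq_zero_or_pos i with rfl | h1
  · rw [show Pw r 0 = ((Fintype.card (Fin r) : ℕ) : MvPolynomial (Fin r) ℂ) from psum_zero _ _]
    exact (SR r α).natCast_mem _
  · rw [pw_eq (by omega)]
    exact (SR r α).mul_mem (C_mem_SR _) (zPol_mem_SR h1 h2)

lemma Z_le_SR (hr : 3 ≤ r) : Zs r ≤ SR r α := by
  rw [Zs]
  refine Algebra.adjoin_le ?_
  rintro x ⟨i, hi, rfl⟩
  simp only [Set.mem_Icc] at hi
  exact pw_mem_SR hr hi.2

lemma sPol_r_mem_SR (hr : 3 ≤ r) : sPol r α r ∈ SR r α := by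
  rw [SR, AlgHom.mem_range]
  refine ⟨X ⟨r-2, by omega⟩, ?_⟩
  rw [aeval_X, sVars]
  simp only
  rw [if_neg (show ¬ (r - 2 < r - 2) by omega)]

lemma zPol_r_eq (hr : 3 ≤ r) (hden : ((r : ℂ) - 1) + α * r ≠ 0) :
    zPol r r = C ((((r : ℂ) - 1) + α * r)/((r : ℂ) - 1)) * sPol r α r
      - C α * zPol r 1 * zPol r (r-1) := by
  rw [sPol_def, ← mul_assoc, ← C_mul, div_mul_div_comm,
    mul_comm (((r:ℂ) - 1) + α * r) ((r:ℂ) - 1), div_self (by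
      exact mul_ne_zero (rm1_ne hr) hden), C_1, one_mul]
  ring

lemma Mp_of_Nlin (hr : 3 ≤ r) (hden : ((r : ℂ) - 1) + α * r ≠ 0)
    {x : MvPolynomial (Fin r) ℂ} (hx : Nlin r x) : Mp r α x := by
  obtain ⟨a, b, c, ha, hb, hc, rfl⟩ := hx
  have haM : Mp r α a := Mp_of_SR (Z_le_SR hr ha)
  have hbM : Mp r α (Pw r (r-1) * b) := by
    have e : Pw r (r-1) * b = sPol r α (r-1) * (C (((r-1:ℕ)):ℂ) * b) := by
      rw [sPol_rm1 hr, pw_eq (show r - 1 ≠ 0 by omega)]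
      ring
    rw [e]
    exact Mp_s_mul ((SR r α).mul_mem (C_mem_SR _) (Z_le_SR hr hb))
  have hcM : Mp r α (Pw r r * c) := by
    have e : Pw r r * c =
        sPol r α r * (C ((r:ℂ) * ((((r : ℂ) - 1) + α * r)/((r : ℂ) - 1))) * c)
        + sPol r α (r-1) * (C (-((r:ℂ) * α)) * zPol r 1 * c) := by
      rw [pw_eq (show r ≠ 0 by omega), zPol_r_eq hr hden, sPol_rm1 hr,
        show (((r:ℕ)):ℂ) = (r:ℂ) from rfl, show (C (-((r:ℂ) * α)) : MvPolynomial (Fin r) ℂ)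
          = -(C ((r:ℂ) * α)) from map_neg C _, C_mul, C_mul]
      ring
    rw [e]
    refine Mp_add (Mp_of_SR ((SR r α).mul_mem (sPol_r_mem_SR hr)
      ((SR r α).mul_mem (C_mem_SR _) (Z_le_SR hr hc)))) (Mp_s_mul ?_)
    exact (SR r α).mul_mem ((SR r α).mul_mem (C_mem_SR _) (zPol_mem_SR (by omega) (by omega)))
      (Z_le_SR hr hc)
  exact Mp_add (Mp_add haM hbM) hcM

lemma pderiv_X_pow (k j : Fin r) (i : ℕ) :
    pderiv k ((X j : MvPolynomial (Fin r) ℂ) ^ i)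
      = if j = k then (i : MvPolynomial (Fin r) ℂ) * X k ^ (i-1) else 0 := by
  rw [(pderiv k).leibniz_pow]
  rcases eq_or_ne j k with rfl | h
  · simp [pderiv_X_self, smul_smul, mul_comm]
  · simp [pderiv_X_of_ne h, h]

lemma pderiv_zPol {i : ℕ} (hi : i ≠ 0) (k : Fin r) :
    pderiv k (zPol r i) = X k ^ (i-1) := by
  rw [zPol, pderiv_C_mul, map_sum]
  simp only [pderiv_X_pow]
  rw [Finset.sum_ite_eq' Finset.univ k (fun _ => (i : MvPolynomial (Fin r) ℂ) * X k ^ (i-1)),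
    if_pos (Finset.mem_univ k),
    show ((i:ℕ) : MvPolynomial (Fin r) ℂ) = C ((i:ℕ):ℂ) by simp, ← mul_assoc, ← C_mul, one_div,
    inv_mul_cancel₀ (by exact_mod_cast hi), C_1, one_mul]

lemma sum_X_pow (a : ℕ) : ∑ k : Fin r, (X k : MvPolynomial (Fin r) ℂ) ^ a = Pw r a := rfl

lemma pderiv_sPol_r (hr : 3 ≤ r) (k : Fin r) :
    pderiv k (sPol r α r) = C (((r:ℂ)-1)/(((r:ℂ)-1)+α*r)) *
      (X k ^ (r-1) + C α * zPol r (r-1) + C α * zPol r 1 * X k ^ (r-2)) := by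
  rw [sPol_def, pderiv_C_mul, map_add, pderiv_zPol (show r ≠ 0 by omega) k, mul_assoc,
    pderiv_mul, pderiv_C, zero_mul, zero_add, pderiv_mul,
    pderiv_zPol (show (1:ℕ) ≠ 0 by omega) k,
    pderiv_zPol (show r - 1 ≠ 0 by omega) k,
    show (1:ℕ) - 1 = 0 from rfl, pow_zero, one_mul, show r - 1 - 1 = r - 2 by omega]
  ring

lemma Mp_low (hr : 3 ≤ r) (hden : ((r:ℂ)-1) + α*r ≠ 0) {i j : ℕ} (h1i : 1 ≤ i)
    (h1j : 1 ≤ j) (hi : i ≠ r) (hj : j ≠ r) (hir : i ≤ r) (hjr : j ≤ r) :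
    Mp r α (∑ k : Fin r, pderiv k (sPol r α i) * pderiv k (sPol r α j)) := by
  have hrw : (∑ k : Fin r, pderiv k (sPol r α i) * pderiv k (sPol r α j))
      = Pw r ((i-1)+(j-1)) := by
    rw [← sum_X_pow]
    refine Finset.sum_congr rfl fun k _ => ?_
    rw [sPol_ne hi, sPol_ne hj, pderiv_zPol (by omega) k, pderiv_zPol (by omega) k, ← pow_add]
  rw [hrw]
  exact Mp_of_Nlin hr hden (Nlin_psum hr _ (by omega))

lemma Mp_mixed (hr : 3 ≤ r) (hden : ((r:ℂ)-1) + α*r ≠ 0) {i : ℕ} (h1 : 1 ≤ i)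
    (hile : i ≤ r) (hi : i ≠ r) :
    Mp r α (∑ k : Fin r, pderiv k (sPol r α i) * pderiv k (sPol r α r)) := by
  have hrw : (∑ k : Fin r, pderiv k (sPol r α i) * pderiv k (sPol r α r))
      = C (((r:ℂ)-1)/(((r:ℂ)-1)+α*(r:ℂ))) * Pw r ((i-1)+(r-1))
        + sPol r α (r-1) * (C (((r:ℂ)-1)/(((r:ℂ)-1)+α*(r:ℂ))) * (C α * Pw r (i-1)))
        + C (((r:ℂ)-1)/(((r:ℂ)-1)+α*(r:ℂ))) * (C α * (zPol r 1 * Pw r ((i-1)+(r-2)))) := by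
    calc ∑ k : Fin r, pderiv k (sPol r α i) * pderiv k (sPol r α r)
        = ∑ k : Fin r, (C (((r:ℂ)-1)/(((r:ℂ)-1)+α*(r:ℂ))) * X k ^ ((i-1)+(r-1))
          + C (((r:ℂ)-1)/(((r:ℂ)-1)+α*(r:ℂ))) * (C α * zPol r (r-1)) * X k ^ (i-1)
          + C (((r:ℂ)-1)/(((r:ℂ)-1)+α*(r:ℂ))) * (C α * zPol r 1) * X k ^ ((i-1)+(r-2))) := by
          refine Finset.sum_congr rfl fun k _ => ?_
          rw [sPol_ne hi, pderiv_zPol (by omega) k, pderiv_sPol_r hr k, pow_add, pow_add]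
          ring
      _ = _ := by
          rw [Finset.sum_add_distrib, Finset.sum_add_distrib, ← Finset.mul_sum, ← Finset.mul_sum,
            ← Finset.mul_sum, sum_X_pow, sum_X_pow, sum_X_pow, sPol_rm1 hr]
          ring
  rw [hrw]
  refine Mp_add (Mp_add ?_ ?_) ?_
  · exact Mp_C_mul _ (Mp_of_Nlin hr hden (Nlin_psum hr _ (by omega)))
  · exact Mp_s_mul ((SR r α).mul_mem (C_mem_SR _) ((SR r α).mul_mem (C_mem_SR _)
      (pw_mem_SR hr (by omega))))
  · exact Mp_C_mul _ (Mp_C_mul _ (Mp_SRmul (zPol_mem_SR (by omega) (by omega))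
      (Mp_of_Nlin hr hden (Nlin_psum hr _ (by omega)))))

lemma Mp_rr (hr : 3 ≤ r) (hden : ((r:ℂ)-1) + α*r ≠ 0)
    (hα : (r : ℂ) * α ^ 2 + 2 * ((r : ℂ) - 1) * α + ((r : ℂ) - 1) = 0) :
    Mp r α (∑ k : Fin r, pderiv k (sPol r α r) * pderiv k (sPol r α r)) := by
  obtain ⟨w, hwN, hw⟩ := psum_2rm2 hr
  have hz : zPol r (r-1) = C ((1:ℂ)/((r:ℂ)-1)) * Pw r (r-1) := by
    rw [zPol_eq, cast_rm1 hr]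
  have hαM : (C ((r:ℂ)) : MvPolynomial (Fin r) ℂ) * C α ^ 2 + 2 * (C ((r:ℂ)) - 1) * C α
      + (C ((r:ℂ)) - 1) = 0 := by
    have h2 := congrArg (MvPolynomial.C (σ := Fin r)) hα
    simpa only [map_add, map_mul, map_pow, map_sub, map_one, map_ofNat, map_zero] using h2
  have hv : (C ((1:ℂ)/((r:ℂ)-1)) : MvPolynomial (Fin r) ℂ) * (C ((r:ℂ)) - 1) = 1 := by
    rw [show (C ((r:ℂ)) - 1 : MvPolynomial (Fin r) ℂ) = C ((r:ℂ)-1) by rw [map_sub, map_one],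
      ← C_mul, one_div, inv_mul_cancel₀ (rm1_ne hr), C_1]
  have hrw : (∑ k : Fin r, pderiv k (sPol r α r) * pderiv k (sPol r α r))
      = C (((r:ℂ)-1)/(((r:ℂ)-1)+α*(r:ℂ))) * (C (((r:ℂ)-1)/(((r:ℂ)-1)+α*(r:ℂ))) * w)
        + C (((r:ℂ)-1)/(((r:ℂ)-1)+α*(r:ℂ))) * (C (((r:ℂ)-1)/(((r:ℂ)-1)+α*(r:ℂ))) *
            (C α * (C α * (zPol r 1 * (zPol r 1 * Pw r ((r-2)+(r-2)))))))
        + C (2:ℂ) * (C (((r:ℂ)-1)/(((r:ℂ)-1)+α*(r:ℂ))) * (C (((r:ℂ)-1)/(((r:ℂ)-1)+α*(r:ℂ))) *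
            (C α * (zPol r 1 * Pw r ((r-1)+(r-2))))))
        + sPol r α (r-1) * (C (2:ℂ) * (C (((r:ℂ)-1)/(((r:ℂ)-1)+α*(r:ℂ))) *
            (C (((r:ℂ)-1)/(((r:ℂ)-1)+α*(r:ℂ))) * (C α * (C α * (zPol r 1 * Pw r (r-2))))))) := by
    calc ∑ k : Fin r, pderiv k (sPol r α r) * pderiv k (sPol r α r)
        = ∑ k : Fin r, (C (((r:ℂ)-1)/(((r:ℂ)-1)+α*(r:ℂ))) * C (((r:ℂ)-1)/(((r:ℂ)-1)+α*(r:ℂ)))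
            * X k ^ ((r-1)+(r-1))
          + C (((r:ℂ)-1)/(((r:ℂ)-1)+α*(r:ℂ))) * C (((r:ℂ)-1)/(((r:ℂ)-1)+α*(r:ℂ)))
            * (C α * C α * (zPol r (r-1) * zPol r (r-1)))
          + C (((r:ℂ)-1)/(((r:ℂ)-1)+α*(r:ℂ))) * C (((r:ℂ)-1)/(((r:ℂ)-1)+α*(r:ℂ)))
            * (C α * C α * (zPol r 1 * zPol r 1)) * X k ^ ((r-2)+(r-2))
          + 2 * (C (((r:ℂ)-1)/(((r:ℂ)-1)+α*(r:ℂ))) * C (((r:ℂ)-1)/(((r:ℂ)-1)+α*(r:ℂ)))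
            * (C α * zPol r (r-1))) * X k ^ (r-1)
          + 2 * (C (((r:ℂ)-1)/(((r:ℂ)-1)+α*(r:ℂ))) * C (((r:ℂ)-1)/(((r:ℂ)-1)+α*(r:ℂ)))
            * (C α * zPol r 1)) * X k ^ ((r-1)+(r-2))
          + 2 * (C (((r:ℂ)-1)/(((r:ℂ)-1)+α*(r:ℂ))) * C (((r:ℂ)-1)/(((r:ℂ)-1)+α*(r:ℂ)))
            * (C α * C α * (zPol r 1 * zPol r (r-1)))) * X k ^ (r-2)) := by
          refine Finset.sum_congr rfl fun k _ => ?_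
          rw [pderiv_sPol_r hr k, pow_add, pow_add, pow_add]
          ring
      _ = _ := by
          simp only [Finset.sum_add_distrib, ← Finset.mul_sum, Finset.sum_const,
            Finset.card_univ, Fintype.card_fin, nsmul_eq_mul, sum_X_pow]
          rw [show (r-1)+(r-1) = 2*r-2 by omega, hw, sPol_rm1 hr, hz,
            show ((r:ℕ) : MvPolynomial (Fin r) ℂ) = C ((r:ℂ)) from by simp,
            show (C (2:ℂ) : MvPolynomial (Fin r) ℂ) = 2 from map_ofNat C 2]
          linear_combination (Pw r (r-1))^2 * (C (((r:ℂ)-1)/(((r:ℂ)-1)+α*(r:ℂ)))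
              * C (((r:ℂ)-1)/(((r:ℂ)-1)+α*(r:ℂ)))) * (C ((1:ℂ)/((r:ℂ)-1))
              * C ((1:ℂ)/((r:ℂ)-1))) * hαM
            - (Pw r (r-1))^2 * (C (((r:ℂ)-1)/(((r:ℂ)-1)+α*(r:ℂ)))
              * C (((r:ℂ)-1)/(((r:ℂ)-1)+α*(r:ℂ)))) * ((1 + 2*C α) * C ((1:ℂ)/((r:ℂ)-1))) * hv
  rw [hrw]
  refine Mp_add (Mp_add (Mp_add ?_ ?_) ?_) ?_
  · exact Mp_C_mul _ (Mp_C_mul _ (Mp_of_Nlin hr hden hwN))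
  · exact Mp_C_mul _ (Mp_C_mul _ (Mp_C_mul _ (Mp_C_mul _ (Mp_SRmul
      (zPol_mem_SR (by omega) (by omega)) (Mp_SRmul (zPol_mem_SR (by omega) (by omega))
      (Mp_of_Nlin hr hden (Nlin_psum hr _ (by omega))))))))
  · exact Mp_C_mul _ (Mp_C_mul _ (Mp_C_mul _ (Mp_C_mul _ (Mp_SRmul
      (zPol_mem_SR (by omega) (by omega)) (Mp_of_Nlin hr hden (Nlin_psum hr _ (by omega)))))))
  · refine Mp_s_mul ((SR r α).mul_mem (C_mem_SR _) ((SR r α).mul_mem (C_mem_SR _)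
      ((SR r α).mul_mem (C_mem_SR _) ((SR r α).mul_mem (C_mem_SR _) ((SR r α).mul_mem
      (C_mem_SR _) ((SR r α).mul_mem (zPol_mem_SR (by omega) (by omega))
      (pw_mem_SR hr (by omega))))))))

end Msec

end Aux

theorem intersection_form_linear_in_s_rm1 (r : ℕ) (hr : 3 ≤ r) (α : ℂ)
    (hα : (r : ℂ) * α ^ 2 + 2 * ((r : ℂ) - 1) * α + ((r : ℂ) - 1) = 0) :
    α.im ≠ 0 ∧ ((r : ℂ) - 1) + α * r ≠ 0 ∧
    ∀ i j : ℕ, 1 ≤ i → i ≤ r → 1 ≤ j → j ≤ r →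
      ∃ P Q : MvPolynomial (Fin (r - 1)) ℂ,
        (∑ k : Fin r,
            (MvPolynomial.pderiv k (sPol r α i)) * (MvPolynomial.pderiv k (sPol r α j))) =
          MvPolynomial.aeval (sVars r α) P +
            sPol r α (r - 1) * MvPolynomial.aeval (sVars r α) Q := by
  have him : α.im ≠ 0 := by
    intro h0
    have hre : α = (α.re : ℂ) := by
      apply Complex.ext
      · rfl
      · simp [h0]
    rw [hre] at hα
    have hR : (r:ℝ) * α.re^2 + 2*((r:ℝ)-1)*α.re + ((r:ℝ)-1) = 0 := by exact_mod_cast hα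
    have hr3 : (3:ℝ) ≤ (r:ℝ) := by exact_mod_cast hr
    nlinarith [sq_nonneg ((r:ℝ)*α.re + ((r:ℝ)-1)), hR, hr3]
  have hden : ((r:ℂ)-1) + α * r ≠ 0 := by
    intro h0
    apply him
    have h1 : α.im * (r:ℝ) = 0 := by simpa using congrArg Complex.im h0
    rcases mul_eq_zero.1 h1 with h | h
    · exact h
    · exact absurd h (by exact_mod_cast (show r ≠ 0 by omega))
  refine ⟨him, hden, ?_⟩
  intro i j h1i hir h1j hjr
  show Aux.Mp r α _
  by_cases hi : i = r <;> by_cases hj : j = r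
  · rw [hi, hj]
    exact Aux.Mp_rr hr hden hα
  · rw [hi]
    have hcomm : (∑ k : Fin r, pderiv k (sPol r α r) * pderiv k (sPol r α j))
        = ∑ k : Fin r, pderiv k (sPol r α j) * pderiv k (sPol r α r) :=
      Finset.sum_congr rfl fun k _ => mul_comm _ _
    rw [hcomm]
    exact Aux.Mp_mixed hr hden h1j hjr hj
  · rw [hj]
    exact Aux.Mp_mixed hr hden h1i hir hi
  · exact Aux.Mp_low hr hden h1i h1j hi hj hir hjr
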